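/- Let G1, G2 be groups and φ : G1 → G2 a bijection such that a multiset over G1 is a product-one sequence over G1 if and only if its termwise image under φ is a product-one sequence over G2. Then for all g1, g2 in G1: g1 g2 ≠ g2 g1 if and only if φ(g1) φ(g2) ≠ φ(g2) φ(g1); equivalently, g1 g2 = g2 g1 if and only if φ(g1) φ(g2) = φ(g2) φ(g1). -/
import Mathlib


/-- A multiset `S` over a group `G` is a *product-one sequence* if its terms can be
ordered so that their product is `1`. -/
def IsProductOne {G : Type*} [Group G] (S : Multiset G) : Prop :=
  ∃ l : List G, (l : Multiset G) = S ∧ l.prod = 1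

/-- The monoid `B(G)` of product-one sequences over `G`, as a submonoid of the free
abelian monoid (finite multisets under addition) over `G`. -/
def ProductOneSubmonoid (G : Type*) [Group G] : AddSubmonoid (Multiset G) where
  carrier := {S | IsProductOne S}
  zero_mem' := ⟨[], rfl, rfl⟩
  add_mem' := by
    rintro a b ⟨l1, rfl, p1⟩ ⟨l2, rfl, p2⟩
    exact ⟨l1 ++ l2, by simp, by simp [p1, p2]⟩

lemma coe3 {G : Type*} [Group G] (g h x : G) : (↑[g,h,x] : Multiset G) = {g,h,x} := rfl

lemma rot {G : Type*} [Group G] {a b c : G} (h : a*(b*c)=1) : b*(c*a)=1 := by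
  rw [mul_eq_one_iff_eq_inv] at h
  subst h
  simp [mul_inv_rev, mul_assoc]

lemma triple {G : Type*} [Group G] (g h x : G) :
    IsProductOne ({g, h, x} : Multiset G) ↔ x = (g*h)⁻¹ ∨ x = (h*g)⁻¹ := by
  constructor
  · rintro ⟨l, hl, hp⟩
    rw [← coe3, Multiset.coe_eq_coe] at hl
    have hmem : l ∈ [g,h,x].permutations' := List.mem_permutations'.mpr hl
    simp [List.permutations', List.permutations'Aux] at hmem
    rcases hmem with rfl|rfl|rfl|rfl|rfl|rfl <;> simp [mul_assoc] at hp <;>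
      simp only [eq_inv_iff_mul_eq_one]
    · exact Or.inl (rot (rot hp))
    · exact Or.inr (rot (rot hp))
    · exact Or.inl (rot hp)
    · exact Or.inr (rot hp)
    · exact Or.inl hp
    · exact Or.inr hp
  · rintro (rfl | rfl)
    · exact ⟨[g, h, (g*h)⁻¹], by rw [coe3], by simp [mul_assoc]⟩
    · refine ⟨[h, g, (h*g)⁻¹], ?_, by simp [mul_assoc]⟩
      rw [coe3]
      exact Multiset.cons_swap _ _ _

lemma comm_iff {G : Type*} [Group G] (a b : G) :
    a*b = b*a ↔ ∀ x y : G, IsProductOne ({a,b,x} : Multiset G) →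
      IsProductOne ({a,b,y} : Multiset G) → x = y := by
  constructor
  · intro hc x y hx hy
    rw [triple] at hx hy
    rcases hx with rfl|rfl <;> rcases hy with rfl|rfl <;> simp [hc]
  · intro hu
    have := hu (a*b)⁻¹ (b*a)⁻¹ ((triple a b _).mpr (Or.inl rfl))
      ((triple a b _).mpr (Or.inr rfl))
    exact inv_injective this

theorem A4 (G1 G2 : Type*) [Group G1] [Group G2]
    (φ : G1 → G2) (hbij : Function.Bijective φ)
    (h : ∀ S : Multiset G1, IsProductOne S ↔ IsProductOne (S.map φ)) :
    ∀ g1 g2 : G1,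
      (g1 * g2 ≠ g2 * g1 ↔ φ g1 * φ g2 ≠ φ g2 * φ g1) ∧
      (g1 * g2 = g2 * g1 ↔ φ g1 * φ g2 = φ g2 * φ g1) := by
  intro g1 g2
  have hmap : ∀ x : G1, (({g1, g2, x} : Multiset G1)).map φ = {φ g1, φ g2, φ x} := by
    intro x; simp
  have key : g1 * g2 = g2 * g1 ↔ φ g1 * φ g2 = φ g2 * φ g1 := by
    rw [comm_iff, comm_iff]
    constructor
    · intro hu y1 y2 hy1 hy2
      obtain ⟨x1, rfl⟩ := hbij.2 y1
      obtain ⟨x2, rfl⟩ := hbij.2 y2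
      rw [← hmap, ← h] at hy1 hy2
      exact congrArg φ (hu x1 x2 hy1 hy2)
    · intro hu x1 x2 hx1 hx2
      rw [h, hmap] at hx1 hx2
      exact hbij.1 (hu (φ x1) (φ x2) hx1 hx2)
  exact ⟨not_congr key, key⟩
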